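/- Let p be a prime, γ ∈ ℚ_p with γ ≠ 0, let K₁ be an open subgroup of the multiplicative group ℚ_pˣ, and let K₂ be a compact open subgroup of the additive group ℚ_p × ℚ_p. Then the ℂ-vector space of all functions φ : ℚ_pˣ → ℂ satisfying (i) φ(b·k) = φ(b) for all b ∈ ℚ_pˣ and k ∈ K₁, and (ii) whenever φ(b) ≠ 0, one has b⁻¹·x + γ·b·y ∈ ℤ_p for all (x, y) ∈ K₂, is finite-dimensional. -/

import Mathlib

/-- The space of functions `φ : ℚ_pˣ → ℂ` which are right-invariant under `K₁` and such
that whenever `φ b ≠ 0` one has `b⁻¹ x + γ b y ∈ ℤ_p` for all `(x, y) ∈ K₂`. -/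
noncomputable def stmt15Space (p : ℕ) [Fact p.Prime] (γ : ℚ_[p])
    (K₁ : Subgroup ℚ_[p]ˣ) (K₂ : AddSubgroup (ℚ_[p] × ℚ_[p])) :
    Submodule ℂ (ℚ_[p]ˣ → ℂ) where
  carrier := {φ | (∀ (b : ℚ_[p]ˣ) (k : K₁), φ (b * (k : ℚ_[p]ˣ)) = φ b) ∧
    ∀ b : ℚ_[p]ˣ, φ b ≠ 0 →
      ∀ xy ∈ K₂, ‖((b : ℚ_[p]))⁻¹ * xy.1 + γ * (b : ℚ_[p]) * xy.2‖ ≤ 1}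
  add_mem' := by
    rintro a b ⟨ha1, ha2⟩ ⟨hb1, hb2⟩
    refine ⟨fun x k => by simp only [Pi.add_apply, ha1 x k, hb1 x k], ?_⟩
    intro x hx xy hxy
    have h : a x ≠ 0 ∨ b x ≠ 0 := by
      by_contra h
      push_neg at h
      apply hx
      simp only [Pi.add_apply, h.1, h.2, add_zero]
    cases h with
    | inl h => exact ha2 x h xy hxy
    | inr h => exact hb2 x h xy hxy
  zero_mem' := ⟨fun x k => rfl, fun x hx => absurd rfl hx⟩
  smul_mem' := by
    rintro c a ⟨ha1, ha2⟩
    refine ⟨fun x k => by simp only [Pi.smul_apply, ha1 x k], ?_⟩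
    intro x hx xy hxy
    have h : a x ≠ 0 := by
      intro h
      apply hx
      simp only [Pi.smul_apply, h, smul_zero]
    exact ha2 x h xy hxy

/-- Let `γ ≠ 0`, `K₁` an open subgroup of `ℚ_pˣ` and `K₂` a compact open subgroup of
`ℚ_p × ℚ_p`.  Then the space of functions `φ : ℚ_pˣ → ℂ` which are right `K₁`-invariant
and whose support satisfies the integrality condition is finite-dimensional. -/
theorem stmt_15 (p : ℕ) [Fact p.Prime] (γ : ℚ_[p]) (hγ : γ ≠ 0)
    (K₁ : Subgroup ℚ_[p]ˣ) (hK₁ : IsOpen (K₁ : Set ℚ_[p]ˣ))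
    (K₂ : AddSubgroup (ℚ_[p] × ℚ_[p])) (hK₂o : IsOpen (K₂ : Set (ℚ_[p] × ℚ_[p])))
    (hK₂c : IsCompact (K₂ : Set (ℚ_[p] × ℚ_[p]))) :
    FiniteDimensional ℂ (stmt15Space p γ K₁ K₂) := by
  -- find small nonzero elements on the axes inside K₂
  have h0 : (0 : ℚ_[p] × ℚ_[p]) ∈ (K₂ : Set (ℚ_[p] × ℚ_[p])) := K₂.zero_mem
  obtain ⟨ε, hε, hball⟩ := Metric.isOpen_iff.mp hK₂o 0 h0
  obtain ⟨t, ht0, htε⟩ := NormedField.exists_norm_lt ℚ_[p] hε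
  have ht0' : t ≠ 0 := by
    intro h; rw [h] at ht0; simp at ht0
  have ht₁ : ((t, 0) : ℚ_[p] × ℚ_[p]) ∈ K₂ := by
    apply hball
    rw [Metric.mem_ball, dist_zero_right]
    simp only [Prod.norm_def, norm_zero]
    exact max_lt htε hε
  have ht₂ : ((0, t) : ℚ_[p] × ℚ_[p]) ∈ K₂ := by
    apply hball
    rw [Metric.mem_ball, dist_zero_right]
    simp only [Prod.norm_def, norm_zero]
    exact max_lt hε htε
  set M : ℝ := (‖γ‖ * ‖t‖)⁻¹ with hM
  -- the annulus
  set A : Set ℚ_[p] := {x | ‖t‖ ≤ ‖x‖ ∧ ‖x‖ ≤ M} with hA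
  have hAcompact : IsCompact A := by
    have : A ⊆ Metric.closedBall 0 M := by
      intro x hx
      simpa [Metric.mem_closedBall, dist_eq_norm] using hx.2
    refine IsCompact.of_isClosed_subset (isCompact_closedBall 0 M) ?_ this
    have h1 : IsClosed {x : ℚ_[p] | ‖t‖ ≤ ‖x‖} :=
      isClosed_le continuous_const continuous_norm
    have h2 : IsClosed {x : ℚ_[p] | ‖x‖ ≤ M} :=
      isClosed_le continuous_norm continuous_const
    exact h1.inter h2
  set T : Set ℚ_[p]ˣ := (Units.val) ⁻¹' A with hT
  have himg : Units.val '' T = A := by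
    apply Set.Subset.antisymm
    · rintro x ⟨u, hu, rfl⟩; exact hu
    · intro x hx
      have hx0 : x ≠ 0 := by
        intro h
        rw [h] at hx
        have := hx.1
        simp at this
        exact ht0' this
      exact ⟨Units.mk0 x hx0, hx, rfl⟩
  have hTcompact : IsCompact T := by
    rw [Units.isEmbedding_val₀.isCompact_iff, himg]
    exact hAcompact
  -- cover T by left cosets of K₁
  have hcover : T ⊆ ⋃ b : ℚ_[p]ˣ, (fun x => b * x) '' (K₁ : Set ℚ_[p]ˣ) := by
    intro b _
    exact Set.mem_iUnion.mpr ⟨b, 1, K₁.one_mem, mul_one b⟩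
  obtain ⟨s, hs⟩ := hTcompact.elim_finite_subcover
    (fun b : ℚ_[p]ˣ => (fun x => b * x) '' (K₁ : Set ℚ_[p]ˣ))
    (fun b => (Homeomorph.mulLeft b).isOpenMap _ hK₁) hcover
  -- the evaluation map
  let F : stmt15Space p γ K₁ K₂ →ₗ[ℂ] (s → ℂ) :=
    { toFun := fun φ i => (φ : ℚ_[p]ˣ → ℂ) i
      map_add' := fun a b => rfl
      map_smul' := fun c a => rfl }
  have hinj : Function.Injective F := by
    rw [injective_iff_map_eq_zero]
    intro φ hφ
    ext b
    by_contra hb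
    -- φ b ≠ 0, so b ∈ T
    have hφmem := φ.2
    obtain ⟨hinv, hsupp⟩ := hφmem
    have h1 := hsupp b hb (t, 0) ht₁
    have h2 := hsupp b hb (0, t) ht₂
    simp only [mul_zero, add_zero, zero_add] at h1 h2
    have hbT : b ∈ T := by
      have hbn : (0:ℝ) < ‖(b : ℚ_[p])‖ := by
        simpa using (norm_pos_iff).mpr b.ne_zero
      constructor
      · -- ‖t‖ ≤ ‖b‖
        rw [norm_mul, norm_inv] at h1
        have := (inv_mul_le_iff₀ hbn).mp h1
        simpa using this
      · -- ‖b‖ ≤ M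
        rw [norm_mul, norm_mul] at h2
        have hγt : (0:ℝ) < ‖γ‖ * ‖t‖ :=
          mul_pos (norm_pos_iff.mpr hγ) (norm_pos_iff.mpr ht0')
        rw [hM, le_inv_comm₀ hbn hγt]
        calc ‖γ‖ * ‖t‖ = (‖γ‖ * ‖(b:ℚ_[p])‖ * ‖t‖) / ‖(b:ℚ_[p])‖ := by
              field_simp
          _ ≤ 1 / ‖(b:ℚ_[p])‖ := by
              gcongr
          _ = ‖(b:ℚ_[p])‖⁻¹ := one_div _
    obtain ⟨i, his, hbi⟩ := Set.mem_iUnion₂.mp (hs hbT)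
    obtain ⟨k, hk, hbk⟩ := hbi
    have : (φ : ℚ_[p]ˣ → ℂ) b = (φ : ℚ_[p]ˣ → ℂ) i := by
      rw [← hbk]
      exact hinv i ⟨k, hk⟩
    have hzero : (φ : ℚ_[p]ˣ → ℂ) i = 0 := congrFun hφ ⟨i, his⟩
    exact hb (this.trans hzero)
  exact FiniteDimensional.of_injective F hinj
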